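/- Let L = {(0,0),(0,1),(1,0),(3,3)} ⊆ ℤ₄² and T = L^m ⊆ ℤ₄^{2m}. Then for every character χ of ℤ₄^{2m}, χ(T)² is a real number. -/
import Mathlib


/-- `L = {(0,0),(0,1),(1,0),(3,3)} ⊆ ℤ₄²`. -/
def Lset : Finset (ZMod 4 × ZMod 4) := {(0, 0), (0, 1), (1, 0), (3, 3)}

/-- `T = L^m ⊆ (ℤ₄²)^m ≅ ℤ₄^{2m}`. -/
def Lpow (m : ℕ) : Finset (Fin m → ZMod 4 × ZMod 4) :=
  Finset.univ.filter fun t => ∀ j, t j ∈ Lset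

lemma addChar_map_sum {A : Type*} [AddCommMonoid A] {ι : Type*} (ψ : AddChar A ℂ)
    (s : Finset ι) (f : ι → A) : ψ (∑ i ∈ s, f i) = ∏ i ∈ s, ψ (f i) := by
  induction s using Finset.cons_induction with
  | empty => simp
  | cons a s ha ih => rw [Finset.sum_cons, Finset.prod_cons, AddChar.map_add_eq_mul, ih]

lemma key (ψ : AddChar (ZMod 4 × ZMod 4) ℂ) :
    ∃ r : ℝ, (∑ l ∈ Lset, ψ l) ^ 2 = (r : ℂ) := by
  set u : ℂ := ψ (1, 0) with hu_def
  set v : ℂ := ψ (0, 1) with hv_def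
  have hu : u ^ 4 = 1 := by
    rw [hu_def, ← AddChar.map_nsmul_eq_pow]
    norm_num
    exact ψ.map_zero_eq_one
  have hv : v ^ 4 = 1 := by
    rw [hv_def, ← AddChar.map_nsmul_eq_pow]
    norm_num
    exact ψ.map_zero_eq_one
  have hune : u ≠ 0 := by
    intro h; rw [h] at hu; simp at hu
  have hvne : v ≠ 0 := by
    intro h; rw [h] at hv; simp at hv
  have h33 : ψ (3, 3) = u ^ 3 * v ^ 3 := by
    have : ((3 : ZMod 4), (3 : ZMod 4)) = (3 : ℕ) • ((1 : ZMod 4), (0 : ZMod 4))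
        + (3 : ℕ) • ((0 : ZMod 4), (1 : ZMod 4)) := by decide
    rw [this, AddChar.map_add_eq_mul, AddChar.map_nsmul_eq_pow, AddChar.map_nsmul_eq_pow]
  have hS : (∑ l ∈ Lset, ψ l) = 1 + v + u + u ^ 3 * v ^ 3 := by
    rw [Lset]
    rw [show ({(0, 0), (0, 1), (1, 0), (3, 3)} : Finset (ZMod 4 × ZMod 4))
        = insert (0,0) (insert (0,1) (insert (1,0) {(3,3)})) from rfl]
    rw [Finset.sum_insert (by decide), Finset.sum_insert (by decide),
      Finset.sum_insert (by decide), Finset.sum_singleton]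
    rw [show ((0 : ZMod 4), (0 : ZMod 4)) = 0 from rfl, ψ.map_zero_eq_one, h33,
      ← hu_def, ← hv_def]
    ring
  -- conjugation facts
  have hcu : (starRingEnd ℂ) u = u ^ 3 := by
    have habs : u * (starRingEnd ℂ) u = 1 := by
      rw [Complex.mul_conj]
      norm_cast
      have h4 : Complex.normSq u ^ 4 = 1 := by
        have := congrArg Complex.normSq hu
        simpa [map_pow] using this
      nlinarith [Complex.normSq_nonneg u, sq_nonneg (Complex.normSq u - 1),
        sq_nonneg (Complex.normSq u + 1), sq_nonneg (Complex.normSq u ^ 2 - 1)]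
    have h2 : u * u ^ 3 = 1 := by rw [← pow_succ']; exact hu
    exact mul_left_cancel₀ hune (habs.trans h2.symm)
  have hcv : (starRingEnd ℂ) v = v ^ 3 := by
    have habs : v * (starRingEnd ℂ) v = 1 := by
      rw [Complex.mul_conj]
      norm_cast
      have h4 : Complex.normSq v ^ 4 = 1 := by
        have := congrArg Complex.normSq hv
        simpa [map_pow] using this
      nlinarith [Complex.normSq_nonneg v, sq_nonneg (Complex.normSq v - 1),
        sq_nonneg (Complex.normSq v + 1), sq_nonneg (Complex.normSq v ^ 2 - 1)]
    have h2 : v * v ^ 3 = 1 := by rw [← pow_succ']; exact hv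
    exact mul_left_cancel₀ hvne (habs.trans h2.symm)
  refine ⟨((1 + v + u + u ^ 3 * v ^ 3) ^ 2).re, ?_⟩
  rw [hS]
  symm
  rw [← Complex.conj_eq_iff_re]
  rw [map_pow, map_add, map_add, map_add, map_mul, map_pow, map_pow, hcu, hcv, map_one]
  have hu9 : (u ^ 3) ^ 3 = u := by linear_combination (u ^ 5 + u) * hu
  have hv9 : (v ^ 3) ^ 3 = v := by linear_combination (v ^ 5 + v) * hv
  rw [hu9, hv9]
  linear_combination (u^2 + 2*v - 2*v^3 - u^2*v^6) * hu + (v^2 + 2*u - 2*u^3 - u^2*v^2) * hv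

/-- for `T = L^m` and every character `χ` of `ℤ₄^{2m} ≅ (ℤ₄²)^m`,
`χ(T)²` is a real number. -/
theorem stmt18 (m : ℕ) (χ : AddChar (Fin m → ZMod 4 × ZMod 4) ℂ) :
    ∃ r : ℝ, (∑ t ∈ Lpow m, χ t) ^ 2 = (r : ℂ) := by
  have hpow : Lpow m = Fintype.piFinset (fun _ => Lset) := by
    ext t; simp [Lpow, Fintype.mem_piFinset]
  have hfac : (∑ t ∈ Lpow m, χ t)
      = ∏ j, ∑ l ∈ Lset, χ (Pi.single j l) := by
    rw [hpow, Finset.prod_univ_sum]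
    refine Finset.sum_congr rfl fun t _ => ?_
    rw [← addChar_map_sum]
    congr 1
    exact (Finset.univ_sum_single t).symm
  choose r hr using fun j =>
    key ((χ.compAddMonoidHom (AddMonoidHom.single (fun _ : Fin m => ZMod 4 × ZMod 4) j)))
  refine ⟨∏ j, r j, ?_⟩
  rw [hfac, ← Finset.prod_pow]
  push_cast
  refine Finset.prod_congr rfl fun j _ => ?_
  have := hr j
  simpa [AddChar.compAddMonoidHom] using this
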